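/- Let 0 < ε ≤ 1/2, α ∈ (0,1], and let K be a nonnegative real with K ≤ ln(1/α). Let D be the probability distribution on [0,1] with cumulative distribution function F given by F(x) = 0 for 0 ≤ x < ε^{K+1}, F(x) = 1 − (α/e)·x^{1/ln ε} for ε^{K+1} ≤ x ≤ ε, and F(x) = 1 − α(1−x)/(1−ε) for ε ≤ x ≤ 1 (so D has a point mass of 1 − αe^K at ε^{K+1}). Then for every coverage level c ∈ [0,1]: (i) the minimum volume of a closed interval I ⊆ [0,1] with D(I) ≥ c equals v*(c) = F^{-1}(c) − ε^{K+1}, where F^{-1}(0) := ε^{K+1}; (ii) v* is convex on [0,1]; and (iii) for any random closed interval 𝐈 ⊆ [0,1] with E[D(𝐈)] ≥ c, one has E[vol(𝐈)] ≥ F^{-1}(c) − ε^{K+1}. -/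

import Mathlib

open MeasureTheory Set
open scoped ENNReal

noncomputable section

def Fcdf (ε α K : ℝ) (x : ℝ) : ℝ :=
  if x < ε ^ (K + 1) then 0
  else if x ≤ ε then 1 - (α / Real.exp 1) * x ^ (1 / Real.log ε)
  else if x ≤ 1 then 1 - α * (1 - x) / (1 - ε)
  else 1

def Finv (ε α K : ℝ) (c : ℝ) : ℝ :=
  if c ≤ 0 then ε ^ (K + 1) else sInf {x : ℝ | c ≤ Fcdf ε α K x}

lemma convexOn_rpow_nonpos {r : ℝ} (hr : r ≤ 0) :
    ConvexOn ℝ (Set.Ioi (0:ℝ)) (fun x : ℝ => x ^ r) := by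
  have hlog : ConvexOn ℝ (Set.Ioi (0:ℝ)) (fun x => r * Real.log x) := by
    have h := (strictConcaveOn_log_Ioi.concaveOn).neg
    have h2 := h.smul (neg_nonneg.2 hr)
    refine h2.congr fun x _ => ?_
    simp only [Pi.neg_apply, smul_eq_mul]
    ring
  refine ⟨convex_Ioi 0, ?_⟩
  intro x hx y hy a b ha hb hab
  have hx' : (0:ℝ) < x := hx
  have hy' : (0:ℝ) < y := hy
  have hcomb : (0:ℝ) < a • x + b • y := by
    rcases eq_or_lt_of_le ha with h | h
    · simp only [← h, zero_smul, zero_add]; have : b = 1 := by linarith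
      simpa [this] using hy'
    · have : 0 ≤ b • y := by positivity
      have : 0 < a • x := by simpa using mul_pos h hx'
      linarith
  have hslog := hlog.2 hx hy ha hb hab
  simp only [smul_eq_mul] at hslog hcomb ⊢
  rw [Real.rpow_def_of_pos hcomb, Real.rpow_def_of_pos hx', Real.rpow_def_of_pos hy']
  have hexp := convexOn_exp.2 (Set.mem_univ (Real.log x * r)) (Set.mem_univ (Real.log y * r))
    ha hb hab
  simp only [smul_eq_mul] at hexp
  calc Real.exp (Real.log (a * x + b * y) * r)
      ≤ Real.exp (a * (Real.log x * r) + b * (Real.log y * r)) := by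
        apply Real.exp_le_exp.2
        have : Real.log (a * x + b * y) * r = r * Real.log (a * x + b * y) := mul_comm _ _
        rw [this]
        calc r * Real.log (a * x + b * y) ≤ a * (r * Real.log x) + b * (r * Real.log y) := hslog
          _ = a * (Real.log x * r) + b * (Real.log y * r) := by ring
    _ ≤ a * Real.exp (Real.log x * r) + b * Real.exp (Real.log y * r) := hexp

section Aux

variable {ε α K : ℝ}

lemma eps_lt_one (hε2 : ε ≤ 1/2) : ε < 1 := lt_of_le_of_lt hε2 (by norm_num)

lemma log_eps_neg (hε : 0 < ε) (hε2 : ε ≤ 1/2) : Real.log ε < 0 :=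
  Real.log_neg hε (eps_lt_one hε2)

lemma m_pos (hε : 0 < ε) : 0 < ε ^ (K + 1) := Real.rpow_pos_of_pos hε _

lemma m_le_eps (hε : 0 < ε) (hε2 : ε ≤ 1/2) (hK : 0 ≤ K) : ε ^ (K + 1) ≤ ε := by
  calc ε ^ (K + 1) ≤ ε ^ (1:ℝ) :=
        Real.rpow_le_rpow_of_exponent_ge hε (eps_lt_one hε2).le (by linarith)
    _ = ε := Real.rpow_one ε

lemma eps_rpow_inv_log (hε : 0 < ε) (hε2 : ε ≤ 1/2) :
    ε ^ (1 / Real.log ε) = Real.exp 1 := by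
  rw [Real.rpow_def_of_pos hε, one_div, mul_inv_cancel₀ (log_eps_neg hε hε2).ne]

lemma m_rpow_inv_log (hε : 0 < ε) (hε2 : ε ≤ 1/2) :
    (ε ^ (K + 1)) ^ (1 / Real.log ε) = Real.exp 1 * Real.exp K := by
  rw [← Real.rpow_mul hε.le, Real.rpow_def_of_pos hε]
  rw [show Real.log ε * ((K + 1) * (1 / Real.log ε)) = K + 1 by
    field_simp [(log_eps_neg hε hε2).ne]]
  rw [Real.exp_add, mul_comm]

lemma Fcdf_of_lt (h : x < ε ^ (K + 1)) : Fcdf ε α K x = 0 := if_pos h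

lemma Fcdf_mid {x : ℝ} (h1 : ε ^ (K + 1) ≤ x) (h2 : x ≤ ε) :
    Fcdf ε α K x = 1 - (α / Real.exp 1) * x ^ (1 / Real.log ε) := by
  rw [Fcdf, if_neg (not_lt.2 h1), if_pos h2]

lemma Fcdf_right (hε : 0 < ε) (hε2 : ε ≤ 1/2) (hK : 0 ≤ K) {x : ℝ}
    (h1 : ε ≤ x) (h2 : x ≤ 1) :
    Fcdf ε α K x = 1 - α * (1 - x) / (1 - ε) := by
  rcases eq_or_lt_of_le h1 with h | h
  · rw [← h, Fcdf_mid (m_le_eps hε hε2 hK) le_rfl, eps_rpow_inv_log hε hε2]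
    have h1ε : (1:ℝ) - ε ≠ 0 := by have := eps_lt_one hε2; intro h'; linarith
    field_simp
  · rw [Fcdf, if_neg (not_lt.2 ((m_le_eps hε hε2 hK).trans h.le)), if_neg (not_le.2 h),
      if_pos h2]

lemma Fcdf_one (hε : 0 < ε) (hε2 : ε ≤ 1/2) (hK : 0 ≤ K) : Fcdf ε α K 1 = 1 := by
  rw [Fcdf_right hε hε2 hK (by linarith [eps_lt_one hε2]) le_rfl]
  simp

lemma Fcdf_at_m (hε : 0 < ε) (hε2 : ε ≤ 1/2) (hK : 0 ≤ K) :
    Fcdf ε α K (ε ^ (K + 1)) = 1 - α * Real.exp K := by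
  rw [Fcdf_mid le_rfl (m_le_eps hε hε2 hK), m_rpow_inv_log hε hε2]
  have h := Real.exp_ne_zero 1
  field_simp

lemma alpha_exp_le_one (hα : 0 < α) (hK2 : K ≤ Real.log (1 / α)) :
    α * Real.exp K ≤ 1 := by
  have h : Real.exp K ≤ Real.exp (Real.log (1 / α)) := Real.exp_le_exp.2 hK2
  rw [Real.exp_log (by positivity)] at h
  calc α * Real.exp K ≤ α * (1 / α) := by nlinarith
    _ = 1 := by field_simp

lemma Fcdf_nonneg (hε : 0 < ε) (hε2 : ε ≤ 1/2) (hα : 0 < α) (hα1 : α ≤ 1)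
    (hK : 0 ≤ K) (hK2 : K ≤ Real.log (1 / α)) (x : ℝ) : 0 ≤ Fcdf ε α K x := by
  have hαe : 0 ≤ α / Real.exp 1 := by positivity
  have h1ε : (0:ℝ) < 1 - ε := by linarith [eps_lt_one hε2]
  rw [Fcdf]
  split_ifs with h1 h2 h3
  · exact le_rfl
  · have hm : ε ^ (K + 1) ≤ x := not_lt.1 h1
    have hxr : x ^ (1 / Real.log ε) ≤ (ε ^ (K + 1)) ^ (1 / Real.log ε) :=
      Real.rpow_le_rpow_of_nonpos (m_pos hε) hm
        (by have := log_eps_neg hε hε2; rw [one_div]; simp [inv_nonpos]; linarith)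
    have h2' : α / Real.exp 1 * x ^ (1 / Real.log ε)
        ≤ α / Real.exp 1 * ((ε ^ (K + 1)) ^ (1 / Real.log ε)) :=
      mul_le_mul_of_nonneg_left hxr hαe
    rw [m_rpow_inv_log hε hε2] at h2'
    have h3' : α / Real.exp 1 * (Real.exp 1 * Real.exp K) = α * Real.exp K := by
      have := Real.exp_ne_zero 1; field_simp
    have := alpha_exp_le_one hα hK2
    linarith [h2', h3' ▸ h2']
  · have hx1 : x ≤ 1 := h3
    have : α * (1 - x) / (1 - ε) ≤ 1 := by
      rw [div_le_one h1ε]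
      nlinarith [not_le.1 h2]
    linarith
  · norm_num

lemma Fcdf_le_one (hε : 0 < ε) (hε2 : ε ≤ 1/2) (hα : 0 < α) (hK : 0 ≤ K)
    (x : ℝ) : Fcdf ε α K x ≤ 1 := by
  have h1ε : (0:ℝ) < 1 - ε := by linarith [eps_lt_one hε2]
  rw [Fcdf]
  split_ifs with h1 h2 h3
  · norm_num
  · have hx0 : 0 ≤ x := ((m_pos hε).trans_le (not_lt.1 h1)).le
    have : 0 ≤ α / Real.exp 1 * x ^ (1 / Real.log ε) := by positivity
    linarith
  · have : 0 ≤ α * (1 - x) / (1 - ε) := by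
      apply div_nonneg _ h1ε.le
      nlinarith
    linarith
  · exact le_rfl

lemma concave_mid (hε : 0 < ε) (hε2 : ε ≤ 1/2) (hα : 0 < α) :
    ConcaveOn ℝ (Icc (ε ^ (K + 1)) ε) (Fcdf ε α K) := by
  have hr : 1 / Real.log ε ≤ 0 := by
    have := log_eps_neg hε hε2
    rw [one_div]
    exact inv_nonpos.2 this.le
  have hαe : (0:ℝ) ≤ α / Real.exp 1 := by positivity
  refine ⟨convex_Icc _ _, ?_⟩
  intro x hx y hy a b ha hb hab
  have hm : (0:ℝ) < ε ^ (K + 1) := m_pos hε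
  have hx0 : (0:ℝ) < x := lt_of_lt_of_le hm hx.1
  have hy0 : (0:ℝ) < y := lt_of_lt_of_le hm hy.1
  have hmem : a • x + b • y ∈ Icc (ε ^ (K + 1)) ε := (convex_Icc _ _) hx hy ha hb hab
  rw [Fcdf_mid hx.1 hx.2, Fcdf_mid hy.1 hy.2, Fcdf_mid hmem.1 hmem.2]
  have hconv := (convexOn_rpow_nonpos hr).2 (show x ∈ Ioi (0:ℝ) from hx0)
    (show y ∈ Ioi (0:ℝ) from hy0) ha hb hab
  simp only [smul_eq_mul] at hconv ⊢
  nlinarith [mul_le_mul_of_nonneg_left hconv hαe]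

lemma key_slope (hε : 0 < ε) (hε2 : ε ≤ 1/2) (hα : 0 < α) (hK : 0 ≤ K)
    {x : ℝ} (hx1 : ε ^ (K + 1) ≤ x) (hx2 : x ≤ ε) :
    α / (1 - ε) * (ε - x) ≤ Fcdf ε α K ε - Fcdf ε α K x := by
  have hL : Real.log ε < 0 := log_eps_neg hε hε2
  set L := Real.log ε with hLdef
  have hx0 : (0:ℝ) < x := lt_of_lt_of_le (m_pos hε) hx1
  have h1ε : (0:ℝ) < 1 - ε := by linarith [eps_lt_one hε2]
  rw [Fcdf_mid (m_le_eps hε hε2 hK) le_rfl, Fcdf_mid hx1 hx2, eps_rpow_inv_log hε hε2]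
  have he : (0:ℝ) < Real.exp 1 := Real.exp_pos 1
  have hxr : x ^ (1/L) = Real.exp (Real.log x * (1/L)) := Real.rpow_def_of_pos hx0 _
  set u := Real.log x * (1/L) with hu
  have hlb : Real.exp 1 * u ≤ Real.exp u := by
    have h := Real.add_one_le_exp (u - 1)
    have h2 : Real.exp u = Real.exp 1 * Real.exp (u - 1) := by
      rw [← Real.exp_add]; ring_nf
    nlinarith [Real.exp_pos (u - 1)]
  have ha : ε - x ≤ ε * (L - Real.log x) := by
    have h := Real.log_le_sub_one_of_pos (show (0:ℝ) < x/ε by positivity)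
    rw [Real.log_div hx0.ne' hε.ne'] at h
    have h2 : ε * (Real.log x - L) ≤ ε * (x/ε - 1) := mul_le_mul_of_nonneg_left h hε.le
    have h3 : ε * (x/ε - 1) = x - ε := by field_simp
    nlinarith
  have hb : -L ≤ (1 - ε)/ε := by
    have h := Real.log_le_sub_one_of_pos (show (0:ℝ) < 1/ε by positivity)
    rw [Real.log_div one_ne_zero hε.ne', Real.log_one] at h
    have h2 : (1:ℝ)/ε - 1 = (1 - ε)/ε := by field_simp
    linarith [h2 ▸ h]
  have hεx : (0:ℝ) ≤ ε - x := by linarith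
  have hc : (ε - x) * (-L) ≤ (L - Real.log x) * (1 - ε) := by
    have h1 : (ε - x) * (-L) ≤ (ε - x) * ((1 - ε)/ε) := mul_le_mul_of_nonneg_left hb hεx
    have h3 := mul_le_mul_of_nonneg_right ha (le_of_lt (div_pos h1ε hε))
    have h4 : ε * (L - Real.log x) * ((1 - ε)/ε) = (L - Real.log x) * (1 - ε) := by
      field_simp
    linarith [h4 ▸ h3]
  have hL0 : L ≠ 0 := hL.ne
  have hu2 : (u - 1) * L = Real.log x - L := by rw [hu]; field_simp
  have hw : (ε - x)/(1 - ε) ≤ u - 1 := by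
    rw [div_le_iff₀ h1ε]
    have h5 : (ε - x) * (-L) ≤ (u - 1) * (1 - ε) * (-L) := by nlinarith [hc, hu2]
    have hnegL : (0:ℝ) < -L := by linarith
    exact le_of_mul_le_mul_right h5 hnegL
  have h6 : α * ((ε - x)/(1 - ε)) ≤ α * (u - 1) := mul_le_mul_of_nonneg_left hw hα.le
  have hstep : Real.exp 1 * u ≤ x ^ (1/L) := by rw [hxr]; exact hlb
  have h7 : α / Real.exp 1 * (Real.exp 1 * u) ≤ α / Real.exp 1 * x ^ (1/L) :=
    mul_le_mul_of_nonneg_left hstep (by positivity)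
  have h8 : α / Real.exp 1 * (Real.exp 1 * u) = α * u := by field_simp
  have h9 : α / (1 - ε) * (ε - x) = α * ((ε - x)/(1 - ε)) := by ring
  have h10 : α / Real.exp 1 * Real.exp 1 = α := div_mul_cancel₀ α (Real.exp_ne_zero 1)
  linarith [h8 ▸ h7]

lemma Fcdf_lin_diff (hε : 0 < ε) (hε2 : ε ≤ 1/2) (hK : 0 ≤ K) {a b : ℝ}
    (h1 : ε ≤ a) (h2 : a ≤ b) (h3 : b ≤ 1) :
    Fcdf ε α K b - Fcdf ε α K a = α / (1 - ε) * (b - a) := by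
  rw [Fcdf_right hε hε2 hK (h1.trans h2) h3, Fcdf_right hε hε2 hK h1 (h2.trans h3)]
  have h1ε : (0:ℝ) < 1 - ε := by linarith [eps_lt_one hε2]
  field_simp
  ring

lemma concaveF (hε : 0 < ε) (hε2 : ε ≤ 1/2) (hα : 0 < α) (hK : 0 ≤ K) :
    ConcaveOn ℝ (Icc (ε ^ (K + 1)) 1) (Fcdf ε α K) := by
  have h1ε : (0:ℝ) < 1 - ε := by linarith [eps_lt_one hε2]
  apply concaveOn_of_slope_anti_adjacent (convex_Icc _ _)
  intro x y z hx hz hxy hyz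
  have hxy' : (0:ℝ) < y - x := sub_pos.2 hxy
  have hyz' : (0:ℝ) < z - y := sub_pos.2 hyz
  set F := Fcdf ε α K with hF
  by_cases hzε : z ≤ ε
  · exact (concave_mid hε hε2 hα).slope_anti_adjacent ⟨hx.1, by linarith⟩ ⟨hz.1, hzε⟩ hxy hyz
  push_neg at hzε
  by_cases hxε : ε ≤ x
  · have e1 := Fcdf_lin_diff (α := α) hε hε2 hK hxε hxy.le (by linarith [hz.2] : y ≤ 1)
    have e2 := Fcdf_lin_diff (α := α) hε hε2 hK (hxε.trans hxy.le) hyz.le hz.2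
    rw [e1, e2, mul_div_assoc, mul_div_assoc, div_self hxy'.ne', div_self hyz'.ne']
  push_neg at hxε
  by_cases hyε : y ≤ ε
  · have hym : ε ^ (K + 1) ≤ y := le_trans hx.1 hxy.le
    have hεz := Fcdf_lin_diff (α := α) hε hε2 hK le_rfl hzε.le hz.2
    -- claims
    have claim1 : α / (1 - ε) * (y - x) ≤ F y - F x := by
      rcases eq_or_lt_of_le hyε with heq | hlt
      · subst heq
        exact key_slope hε hε2 hα hK hx.1 hxε.le
      · have key_y := key_slope hε hε2 hα hK hym hyε
        have sl := (concave_mid hε hε2 hα (K := K)).slope_anti_adjacent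
          ⟨hx.1, hxε.le⟩ ⟨m_le_eps hε hε2 hK, le_rfl⟩ hxy hlt
        have hεy : (0:ℝ) < ε - y := sub_pos.2 hlt
        rw [div_le_div_iff₀ hεy hxy'] at sl
        -- (F ε - F y) * (y - x) ≤ (F y - F x) * (ε - y)
        -- key_y : α/(1-ε)*(ε-y) ≤ F ε - F y
        nlinarith [key_y, sl, mul_le_mul_of_nonneg_right key_y hxy'.le]
    have claim2 : (F ε - F y) * (y - x) ≤ (F y - F x) * (ε - y) := by
      rcases eq_or_lt_of_le hyε with heq | hlt
      · rw [← heq]; simp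
      · have sl := (concave_mid hε hε2 hα (K := K)).slope_anti_adjacent
          ⟨hx.1, hxε.le⟩ ⟨m_le_eps hε hε2 hK, le_rfl⟩ hxy hlt
        have hεy : (0:ℝ) < ε - y := sub_pos.2 hlt
        rw [div_le_div_iff₀ hεy hxy'] at sl
        exact sl
    rw [div_le_div_iff₀ hyz' hxy']
    -- (F z - F y) * (y - x) ≤ (F y - F x) * (z - y)
    have hdz : F z - F ε = α / (1 - ε) * (z - ε) := hεz
    have hzε2 : (0:ℝ) ≤ z - ε := by linarith
    nlinarith [claim1, claim2, mul_le_mul_of_nonneg_right claim1 hzε2]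
  · push_neg at hyε
    have e2 := Fcdf_lin_diff (α := α) hε hε2 hK hyε.le hyz.le hz.2
    have key_x := key_slope hε hε2 hα hK hx.1 hxε.le
    have e3 := Fcdf_lin_diff (α := α) hε hε2 hK le_rfl hyε.le (by linarith [hz.2])
    rw [e2, mul_div_assoc, div_self hyz'.ne', mul_one, le_div_iff₀ hxy']
    nlinarith [key_x, e3]

lemma contF (hε : 0 < ε) (hε2 : ε ≤ 1/2) (hK : 0 ≤ K) :
    ContinuousOn (Fcdf ε α K) (Icc (ε ^ (K + 1)) 1) := by
  have hmpos : (0:ℝ) < ε ^ (K + 1) := m_pos hε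
  have h1ε : (0:ℝ) < 1 - ε := by linarith [eps_lt_one hε2]
  set m := ε ^ (K + 1) with hm
  set r := 1 / Real.log ε with hr
  set h : ℝ → ℝ := fun x =>
    if x ≤ ε then 1 - (α / Real.exp 1) * (max x m) ^ r else 1 - α * (1 - x) / (1 - ε)
    with hh
  have hcont : Continuous h := by
    apply Continuous.if_le
    · refine continuous_const.sub (continuous_const.mul ?_)
      refine continuous_iff_continuousAt.2 fun x => ?_
      exact ContinuousAt.rpow_const ((continuous_id.max continuous_const).continuousAt)
        (Or.inl (ne_of_gt (lt_of_lt_of_le hmpos (le_max_right _ _))))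
    · exact continuous_const.sub
        ((continuous_const.mul (continuous_const.sub continuous_id)).div_const _)
    · exact continuous_id
    · exact continuous_const
    · intro x hx
      rw [hx, max_eq_left (m_le_eps hε hε2 hK), hr, eps_rpow_inv_log hε hε2]
      field_simp
  refine ContinuousOn.congr hcont.continuousOn fun x hx => ?_
  by_cases hxe : x ≤ ε
  · rw [Fcdf_mid hx.1 hxe, hh]
    simp only [if_pos hxe, max_eq_left hx.1]
    rw [hr]
  · rw [Fcdf_right hε hε2 hK (not_le.1 hxe).le hx.2, hh]
    simp only [if_neg hxe]

lemma finv_spec (hε : 0 < ε) (hε2 : ε ≤ 1/2) (hα : 0 < α) (hα1 : α ≤ 1)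
    (hK : 0 ≤ K) (hK2 : K ≤ Real.log (1 / α)) {c : ℝ} (hc0 : 0 ≤ c) (hc1 : c ≤ 1) :
    Finv ε α K c ∈ Icc (ε ^ (K + 1)) 1 ∧ c ≤ Fcdf ε α K (Finv ε α K c) ∧
      ∀ x, ε ^ (K + 1) ≤ x → c ≤ Fcdf ε α K x → Finv ε α K c ≤ x := by
  have hm1 : ε ^ (K + 1) ≤ 1 := (m_le_eps hε hε2 hK).trans (by linarith [eps_lt_one hε2])
  set m := ε ^ (K + 1) with hm
  rcases le_or_gt c 0 with hc | hc
  · rw [Finv, if_pos hc]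
    have hc' : c = 0 := le_antisymm hc hc0
    exact ⟨⟨le_rfl, hm1⟩, hc' ▸ Fcdf_nonneg hε hε2 hα hα1 hK hK2 _,
      fun x hx _ => hx⟩
  · set T := {x : ℝ | c ≤ Fcdf ε α K x} with hT
    set T' := T ∩ Icc m 1 with hT'
    have hTm : ∀ x ∈ T, m ≤ x := by
      intro x hx
      by_contra hcon
      push_neg at hcon
      have h0 : Fcdf ε α K x = 0 := Fcdf_of_lt hcon
      have : c ≤ 0 := by rw [← h0]; exact hx
      linarith
    have h1T' : (1:ℝ) ∈ T' := ⟨by simp only [hT, mem_setOf_eq, Fcdf_one hε hε2 hK]; exact hc1,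
      ⟨hm1, le_rfl⟩⟩
    have hbdd : BddBelow T' := ⟨m, fun x hx => hx.2.1⟩
    have hclosed : IsClosed T' := by
      have heq : T' = Icc m 1 ∩ (Fcdf ε α K) ⁻¹' (Ici c) := by
        ext x; simp only [hT', hT, mem_inter_iff, mem_setOf_eq, mem_preimage, mem_Ici]
        tauto
      rw [heq]
      exact (contF hε hε2 hK).preimage_isClosed_of_isClosed isClosed_Icc isClosed_Ici
    have hz := hclosed.csInf_mem ⟨1, h1T'⟩ hbdd
    have hle : ∀ x, m ≤ x → c ≤ Fcdf ε α K x → sInf T' ≤ x := by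
      intro x hmx hcx
      by_cases hx1 : x ≤ 1
      · exact csInf_le hbdd ⟨hcx, hmx, hx1⟩
      · exact le_trans (csInf_le hbdd h1T') (not_le.1 hx1).le
    have hFinv : Finv ε α K c = sInf T' := by
      rw [Finv, if_neg (not_le.2 hc)]
      apply le_antisymm
      · exact csInf_le_csInf ⟨m, fun x hx => hTm x hx⟩ ⟨1, h1T'⟩ inter_subset_left
      · exact le_csInf ⟨1, h1T'.1⟩ fun x hx => hle x (hTm x hx) hx
    rw [hFinv]
    exact ⟨hz.2, hz.1, hle⟩

lemma Iio_null (hε : 0 < ε) (D : Measure ℝ)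
    (hcdf : ∀ x : ℝ, D (Set.Iic x) = ENNReal.ofReal (Fcdf ε α K x)) :
    D (Iio (ε ^ (K + 1))) = 0 := by
  set m := ε ^ (K + 1) with hm
  have hsub : Iio m ⊆ ⋃ n : ℕ, Iic (m - 1/(n+1)) := by
    intro x hx
    have hpos : 0 < m - x := sub_pos.2 hx
    obtain ⟨n, hn⟩ := exists_nat_one_div_lt hpos
    exact mem_iUnion.2 ⟨n, by simp only [mem_Iic]; linarith⟩
  apply measure_mono_null hsub
  apply measure_iUnion_null
  intro n
  rw [hcdf]
  have hlt : m - 1/(n+1) < m := by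
    have : (0:ℝ) < 1/((n:ℝ)+1) := by positivity
    linarith
  rw [Fcdf_of_lt hlt, ENNReal.ofReal_zero]

lemma lb_lemma (hε : 0 < ε) (hε2 : ε ≤ 1/2) (hα : 0 < α) (hα1 : α ≤ 1)
    (hK : 0 ≤ K) (hK2 : K ≤ Real.log (1 / α))
    (D : Measure ℝ) [IsProbabilityMeasure D]
    (hcdf : ∀ x : ℝ, D (Set.Iic x) = ENNReal.ofReal (Fcdf ε α K x))
    {c : ℝ} (hc0 : 0 ≤ c) (hc1 : c ≤ 1) {p q : ℝ}
    (hp : 0 ≤ p) (hpq : p ≤ q) (hq1 : q ≤ 1)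
    (hD : ENNReal.ofReal c ≤ D (Icc p q)) :
    Finv ε α K c - ε ^ (K + 1) ≤ q - p := by
  have hm1 : ε ^ (K + 1) ≤ 1 := (m_le_eps hε hε2 hK).trans (by linarith [eps_lt_one hε2])
  set m := ε ^ (K + 1) with hm
  obtain ⟨hmem, hFF, hle⟩ := finv_spec hε hε2 hα hα1 hK hK2 hc0 hc1
  rcases le_or_gt c 0 with hcneg | hcpos
  · have hfc : Finv ε α K c = m := by rw [Finv, if_pos hcneg]
    rw [hfc]; linarith
  have hFq : c ≤ Fcdf ε α K q := by
    have h1 : D (Icc p q) ≤ D (Iic q) := measure_mono Icc_subset_Iic_self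
    have h2 : ENNReal.ofReal c ≤ ENNReal.ofReal (Fcdf ε α K q) :=
      le_trans hD (by rw [← hcdf]; exact h1)
    exact (ENNReal.ofReal_le_ofReal_iff (Fcdf_nonneg hε hε2 hα hα1 hK hK2 q)).1 h2
  have hmq : m ≤ q := by
    by_contra hcon
    push_neg at hcon
    rw [Fcdf_of_lt hcon] at hFq
    linarith
  rcases le_or_gt p m with hpm | hpm
  · have := hle q hmq hFq
    linarith
  · have key : ∀ p', m ≤ p' → p' < p → Finv ε α K c ≤ m + q - p' := by
      intro p' hmp' hp'p
      have hp'q : p' ≤ q := le_trans hp'p.le hpq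
      have hdiff : ENNReal.ofReal c ≤ D (Iic q) - D (Iic p') := by
        have hsub : Icc p q ⊆ Iic q \ Iic p' := by
          intro x hx
          refine ⟨hx.2, ?_⟩
          simp only [mem_Iic, not_le]
          linarith [hx.1]
        calc ENNReal.ofReal c ≤ D (Icc p q) := hD
          _ ≤ D (Iic q \ Iic p') := measure_mono hsub
          _ = D (Iic q) - D (Iic p') :=
              measure_diff (Iic_subset_Iic.2 hp'q) measurableSet_Iic.nullMeasurableSet
                (measure_ne_top D _)
      have hsum : ENNReal.ofReal c + D (Iic p') ≤ D (Iic q) := by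
        have h := add_le_add_left hdiff (D (Iic p'))
        rwa [tsub_add_cancel_of_le (measure_mono (Iic_subset_Iic.2 hp'q))] at h
      rw [hcdf, hcdf, ← ENNReal.ofReal_add hc0 (Fcdf_nonneg hε hε2 hα hα1 hK hK2 p')] at hsum
      have hcF : c + Fcdf ε α K p' ≤ Fcdf ε α K q :=
        (ENNReal.ofReal_le_ofReal_iff (Fcdf_nonneg hε hε2 hα hα1 hK hK2 q)).1 hsum
      set w := m + q - p' with hw
      have hwq : w ≤ q := by rw [hw]; linarith
      have hw1 : w ≤ 1 := le_trans hwq hq1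
      have hwm : m ≤ w := by rw [hw]; linarith
      have hqm : m < q := lt_of_lt_of_le hpm hpq
      have hqm' : (0:ℝ) < q - m := by linarith
      set lam := (q - p')/(q - m) with hlam
      have h0lam : 0 ≤ lam := div_nonneg (by linarith) (by linarith)
      have h1lam : lam ≤ 1 := by
        rw [hlam, div_le_one hqm']
        linarith
      have hconc := concaveF hε hε2 hα hK
      have hne : q - m ≠ 0 := hqm'.ne'
      have e1 : lam • m + (1 - lam) • q = p' := by
        simp only [smul_eq_mul]
        rw [hlam]
        field_simp
        ring
      have e2 : (1 - lam) • m + lam • q = w := by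
        simp only [smul_eq_mul]
        rw [hlam, hw]
        field_simp
        ring
      have c1 : lam • Fcdf ε α K m + (1 - lam) • Fcdf ε α K q
          ≤ Fcdf ε α K (lam • m + (1 - lam) • q) :=
        hconc.2 (show m ∈ Icc m 1 from ⟨le_rfl, hm1⟩) (show q ∈ Icc m 1 from ⟨hmq, hq1⟩)
          h0lam (by linarith) (by ring)
      have c2 : (1 - lam) • Fcdf ε α K m + lam • Fcdf ε α K q
          ≤ Fcdf ε α K ((1 - lam) • m + lam • q) :=
        hconc.2 (show m ∈ Icc m 1 from ⟨le_rfl, hm1⟩) (show q ∈ Icc m 1 from ⟨hmq, hq1⟩)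
          (by linarith) h0lam (by ring)
      rw [e1] at c1
      rw [e2] at c2
      simp only [smul_eq_mul] at c1 c2
      have hFm0 : 0 ≤ Fcdf ε α K m := Fcdf_nonneg hε hε2 hα hα1 hK hK2 m
      have hFw : c ≤ Fcdf ε α K w := by linarith
      have := hle w hwm hFw
      rw [hw] at this
      linarith
    have hδ : ∀ δ > 0, Finv ε α K c ≤ (m + q - p) + δ := by
      intro δ hδ
      rcases le_or_gt (p - δ) m with h | h
      · have := key m le_rfl hpm
        linarith
      · have := key (p - δ) h.le (by linarith)
        linarith
    have := le_of_forall_pos_le_add hδ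
    linarith

lemma vstar_convex (hε : 0 < ε) (hε2 : ε ≤ 1/2) (hα : 0 < α) (hα1 : α ≤ 1)
    (hK : 0 ≤ K) (hK2 : K ≤ Real.log (1 / α)) :
    ConvexOn ℝ (Icc (0:ℝ) 1) (fun c' => Finv ε α K c' - ε ^ (K + 1)) := by
  refine ⟨convex_Icc _ _, ?_⟩
  intro c1 hc1 c2 hc2 a b ha hb hab
  obtain ⟨hmem1, hF1, hle1⟩ := finv_spec hε hε2 hα hα1 hK hK2 hc1.1 hc1.2
  obtain ⟨hmem2, hF2, hle2⟩ := finv_spec hε hε2 hα hα1 hK hK2 hc2.1 hc2.2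
  have hcomb0 : 0 ≤ a*c1 + b*c2 := add_nonneg (mul_nonneg ha hc1.1) (mul_nonneg hb hc2.1)
  have hcomb1 : a*c1 + b*c2 ≤ 1 := by nlinarith [hc1.2, hc2.2]
  obtain ⟨hmemc, hFc, hlec⟩ := finv_spec hε hε2 hα hα1 hK hK2 hcomb0 hcomb1
  simp only [smul_eq_mul]
  set m := ε ^ (K + 1) with hm
  set x1 := Finv ε α K c1 with hx1
  set x2 := Finv ε α K c2 with hx2
  have hconc := concaveF hε hε2 hα hK
  have hcc := hconc.2 hmem1 hmem2 ha hb hab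
  simp only [smul_eq_mul] at hcc
  have hm' : a*m + b*m = m := by rw [← add_mul, hab, one_mul]
  have hx : m ≤ a*x1 + b*x2 := by
    have h1 := mul_le_mul_of_nonneg_left hmem1.1 ha
    have h2 := mul_le_mul_of_nonneg_left hmem2.1 hb
    linarith
  have hFx : a*c1 + b*c2 ≤ Fcdf ε α K (a*x1 + b*x2) := by
    have h1 := mul_le_mul_of_nonneg_left hF1 ha
    have h2 := mul_le_mul_of_nonneg_left hF2 hb
    linarith
  have hfin := hlec _ hx hFx
  linarith

end Aux

/-- **The volume-optimality function of `D^{(K)}`** (Fact 5.2 and the surrounding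
computation in the proof of Theorem 5.1). -/
theorem stmt15 (ε α K : ℝ) (hε : 0 < ε) (hε2 : ε ≤ 1 / 2)
    (hα : 0 < α) (hα1 : α ≤ 1) (hK : 0 ≤ K) (hK2 : K ≤ Real.log (1 / α))
    (D : Measure ℝ) [IsProbabilityMeasure D]
    (hcdf : ∀ x : ℝ, D (Set.Iic x) = ENNReal.ofReal (Fcdf ε α K x))
    (c : ℝ) (hc : c ∈ Set.Icc (0:ℝ) 1) :
    (sInf {v : ℝ | ∃ p q : ℝ, 0 ≤ p ∧ p ≤ q ∧ q ≤ 1 ∧ v = q - p ∧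
        ENNReal.ofReal c ≤ D (Set.Icc p q)}
      = Finv ε α K c - ε ^ (K + 1)) ∧
    ConvexOn ℝ (Set.Icc (0:ℝ) 1) (fun c' => Finv ε α K c' - ε ^ (K + 1)) ∧
    (∀ (Ω : Type) [MeasurableSpace Ω] (P : Measure Ω), IsProbabilityMeasure P →
      ∀ lo hi : Ω → ℝ, Measurable lo → Measurable hi →
        (∀ ω, 0 ≤ lo ω ∧ lo ω ≤ hi ω ∧ hi ω ≤ 1) →
        Measurable (fun ω => (D (Set.Icc (lo ω) (hi ω))).toReal) →
        c ≤ ∫ ω, (D (Set.Icc (lo ω) (hi ω))).toReal ∂P →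
        Finv ε α K c - ε ^ (K + 1) ≤ ∫ ω, (hi ω - lo ω) ∂P) := by
  obtain ⟨hc0, hc1⟩ := hc
  obtain ⟨hmem, hFF, hle⟩ := finv_spec hε hε2 hα hα1 hK hK2 hc0 hc1
  have hm0 : (0:ℝ) < ε ^ (K + 1) := m_pos hε
  have hIio : D (Iio (ε ^ (K + 1))) = 0 := Iio_null hε D hcdf
  have hmemS : Finv ε α K c - ε ^ (K + 1) ∈ {v : ℝ | ∃ p q : ℝ, 0 ≤ p ∧ p ≤ q ∧ q ≤ 1 ∧
      v = q - p ∧ ENNReal.ofReal c ≤ D (Set.Icc p q)} := by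
    refine ⟨ε ^ (K + 1), Finv ε α K c, hm0.le, hmem.1, hmem.2, rfl, ?_⟩
    have hIcc : Icc (ε ^ (K + 1)) (Finv ε α K c) = Iic (Finv ε α K c) \ Iio (ε ^ (K + 1)) := by
      ext x
      simp only [mem_Icc, mem_diff, mem_Iic, mem_Iio, not_lt]
      tauto
    rw [hIcc, measure_diff_null hIio, hcdf]
    exact ENNReal.ofReal_le_ofReal hFF
  have hlbS : ∀ v ∈ {v : ℝ | ∃ p q : ℝ, 0 ≤ p ∧ p ≤ q ∧ q ≤ 1 ∧
      v = q - p ∧ ENNReal.ofReal c ≤ D (Set.Icc p q)}, Finv ε α K c - ε ^ (K + 1) ≤ v := by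
    rintro v ⟨p, q, hp, hpq, hq1, rfl, hD⟩
    exact lb_lemma hε hε2 hα hα1 hK hK2 D hcdf hc0 hc1 hp hpq hq1 hD
  refine ⟨le_antisymm (csInf_le ⟨_, hlbS⟩ hmemS) (le_csInf ⟨_, hmemS⟩ hlbS),
    vstar_convex hε hε2 hα hα1 hK hK2, ?_⟩
  intro Ω _ P hP lo hi hlo hhi hbounds hXmeas hint
  haveI := hP
  set X : Ω → ℝ := fun ω => (D (Set.Icc (lo ω) (hi ω))).toReal with hX
  have hX01 : ∀ ω, X ω ∈ Icc (0:ℝ) 1 := by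
    intro ω
    refine ⟨ENNReal.toReal_nonneg, ?_⟩
    have h := prob_le_one (μ := D) (s := Set.Icc (lo ω) (hi ω))
    simpa using ENNReal.toReal_mono (by simp) h
  have hpt : ∀ ω, Finv ε α K (X ω) - ε ^ (K + 1) ≤ hi ω - lo ω := by
    intro ω
    refine lb_lemma hε hε2 hα hα1 hK hK2 D hcdf (hX01 ω).1 (hX01 ω).2
      (hbounds ω).1 (hbounds ω).2.1 (hbounds ω).2.2 ?_
    rw [hX]
    rw [ENNReal.ofReal_toReal (measure_ne_top D _)]
  have hXint : Integrable X P := by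
    refine Integrable.mono' (integrable_const (1:ℝ)) hXmeas.aestronglyMeasurable ?_
    refine ae_of_all _ fun ω => ?_
    rw [Real.norm_eq_abs, abs_of_nonneg (hX01 ω).1]
    exact (hX01 ω).2
  have hVint : Integrable (fun ω => hi ω - lo ω) P := by
    refine Integrable.mono' (integrable_const (1:ℝ)) (hhi.sub hlo).aestronglyMeasurable ?_
    refine ae_of_all _ fun ω => ?_
    have hb := hbounds ω
    rw [Real.norm_eq_abs, abs_of_nonneg (by linarith [hb.2.1])]
    linarith [hb.1, hb.2.2]
  rcases eq_or_lt_of_le hc0 with hc0' | hc0'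
  · have hfc : Finv ε α K c = ε ^ (K + 1) := by rw [Finv, if_pos hc0'.ge]
    rw [hfc, sub_self]
    refine integral_nonneg fun ω => ?_
    simp only [Pi.zero_apply]
    linarith [(hbounds ω).2.1]
  rcases eq_or_lt_of_le hc1 with hc1' | hc1'
  · subst hc1'
    have hg : Integrable (fun ω => 1 - X ω) P := (integrable_const 1).sub hXint
    have hgnn : ∀ ω, 0 ≤ 1 - X ω := fun ω => by linarith [(hX01 ω).2]
    have hint1 : ∫ ω, (1 - X ω) ∂P = 1 - ∫ ω, X ω ∂P := by
      rw [integral_sub (integrable_const 1) hXint, integral_const]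
      simp [measure_univ]
    have hle0 : ∫ ω, (1 - X ω) ∂P ≤ 0 := by rw [hint1]; linarith
    have hge0 : (0:ℝ) ≤ ∫ ω, (1 - X ω) ∂P := integral_nonneg hgnn
    have hzero := (integral_eq_zero_iff_of_nonneg hgnn hg).1 (le_antisymm hle0 hge0)
    have hae : ∀ᵐ ω ∂P, Finv ε α K 1 - ε ^ (K + 1) ≤ hi ω - lo ω := by
      filter_upwards [hzero] with ω hω
      simp only [Pi.zero_apply] at hω
      have hXω : X ω = 1 := by linarith
      calc Finv ε α K 1 - ε ^ (K + 1) = Finv ε α K (X ω) - ε ^ (K + 1) := by rw [hXω]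
        _ ≤ hi ω - lo ω := hpt ω
    calc Finv ε α K 1 - ε ^ (K + 1)
        = ∫ _ω, (Finv ε α K 1 - ε ^ (K + 1)) ∂P := by rw [integral_const]; simp [measure_univ]
      _ ≤ ∫ ω, (hi ω - lo ω) ∂P := integral_mono_ae (integrable_const _) hVint hae
  · -- 0 < c < 1
    set v : ℝ → ℝ := fun c' => Finv ε α K c' - ε ^ (K + 1) with hv
    have hvconv : ConvexOn ℝ (Icc (0:ℝ) 1) v := vstar_convex hε hε2 hα hα1 hK hK2
    set Sl := (fun x => (v c - v x)/(c - x)) '' (Ico 0 c) with hSl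
    have h0mem : (0:ℝ) ∈ Ico 0 c := ⟨le_rfl, hc0'⟩
    have hne : Sl.Nonempty := ⟨_, mem_image_of_mem _ h0mem⟩
    have hbddS : BddAbove Sl := by
      refine ⟨(v 1 - v c)/(1 - c), ?_⟩
      rintro t ⟨x, hx, rfl⟩
      exact hvconv.slope_mono_adjacent ⟨hx.1, by linarith [hx.2]⟩ ⟨zero_le_one, le_rfl⟩
        hx.2 hc1'
    set s := sSup Sl with hs
    have hv0 : v 0 = 0 := by
      simp only [hv]
      rw [Finv, if_pos le_rfl, sub_self]
    have hs0 : 0 ≤ s := by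
      have h0 : (v c - v 0)/(c - 0) ∈ Sl := mem_image_of_mem _ h0mem
      have hsl := le_csSup hbddS h0
      have hnn : 0 ≤ (v c - v 0)/(c - 0) := by
        apply div_nonneg _ (by linarith)
        rw [hv0]
        simp only [hv, sub_nonneg]
        linarith [hmem.1]
      linarith
    have hsupp : ∀ u, 0 ≤ u → u ≤ 1 → v c + s * (u - c) ≤ v u := by
      intro u hu0 hu1
      rcases lt_trichotomy u c with h | h | h
      · have hmem' : (v c - v u)/(c - u) ∈ Sl := mem_image_of_mem _ ⟨hu0, h⟩
        have hsl := le_csSup hbddS hmem'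
        rw [div_le_iff₀ (by linarith : (0:ℝ) < c - u)] at hsl
        nlinarith
      · rw [h]; simp
      · have hub : ∀ t ∈ Sl, t ≤ (v u - v c)/(u - c) := by
          rintro t ⟨x, hx, rfl⟩
          exact hvconv.slope_mono_adjacent ⟨hx.1, by linarith [hx.2]⟩ ⟨hu0, hu1⟩ hx.2 h
        have hsl := csSup_le hne hub
        rw [le_div_iff₀ (by linarith : (0:ℝ) < u - c)] at hsl
        nlinarith
    have hptw : ∀ ω, v c + s * (X ω - c) ≤ hi ω - lo ω := by
      intro ω
      have h1 := hsupp (X ω) (hX01 ω).1 (hX01 ω).2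
      have h2 := hpt ω
      simp only [hv] at h1 ⊢
      linarith
    have hlint : Integrable (fun ω => v c + s * (X ω - c)) P :=
      (integrable_const _).add ((hXint.sub (integrable_const c)).const_mul s)
    have hmono := integral_mono hlint hVint hptw
    have hcalc : ∫ ω, (v c + s * (X ω - c)) ∂P = v c + s * ((∫ ω, X ω ∂P) - c) := by
      have h1 : (fun ω => v c + s * (X ω - c)) = fun ω => (v c - s * c) + s * X ω := by
        funext ω; ring
      rw [h1, integral_add (integrable_const _) (hXint.const_mul s), integral_const,
        integral_const_mul]
      simp [measure_univ]
      ring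
    rw [hcalc] at hmono
    have hfin : v c ≤ v c + s * ((∫ ω, X ω ∂P) - c) := by nlinarith
    simp only [hv] at hfin hmono ⊢
    linarith

end
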